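/- Let G be the graph on vertex set ℕ₊ with edge set {{u, v} : u < v and 2u ≤ v}. Then G has no strongly minimal vertex-cover: for every vertex-cover A there is a vertex-cover A' with |A \ A'| > |A' \ A|. -/
import Mathlib


/-- A vertex-cover of the graph `G` on the positive integers with edges `{u,v}` for
`u < v` and `2u ≤ v`: a set of positive integers meeting every such edge. -/
def IsCoverG (A : Set ℕ) : Prop :=
  A ⊆ {n | 0 < n} ∧ ∀ u v : ℕ, 0 < u → u < v → 2 * u ≤ v → u ∈ A ∨ v ∈ A

/-- The graph `G` has no strongly minimal vertex-cover. -/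
theorem stmt_6 (A : Set ℕ) (hA : IsCoverG A) :
    ∃ A' : Set ℕ, IsCoverG A' ∧ (A \ A').Finite ∧ (A' \ A).Finite ∧
      (A' \ A).ncard < (A \ A').ncard := by
  classical
  obtain ⟨hsub, hcov⟩ := hA
  by_cases hC : ∃ n, 0 < n ∧ n ∉ A
  · -- complement is nonempty; let x be its least element
    set x := Nat.find hC with hxdef
    have hx : 0 < x ∧ x ∉ A := Nat.find_spec hC
    have hxmin : ∀ n, 0 < n → n ∉ A → x ≤ n := fun n h1 h2 => Nat.find_min' hC ⟨h1, h2⟩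
    -- every n not in A (positive) satisfies n < 2x
    have hlt : ∀ n, 0 < n → n ∉ A → n < 2 * x := by
      intro n h1 h2
      by_contra h
      push_neg at h
      have hxn : x < n := by have := hx.1; omega
      rcases hcov x n hx.1 hxn h with h' | h'
      · exact hx.2 h'
      · exact h2 h'
    -- y : maximum of the complement
    set y := Nat.findGreatest (fun n => 0 < n ∧ n ∉ A) (2 * x) with hydef
    have hxy : x ≤ y := Nat.le_findGreatest (by omega) hx
    have hy : 0 < y ∧ y ∉ A :=
      Nat.findGreatest_spec (P := fun n => 0 < n ∧ n ∉ A) (show x ≤ 2 * x by omega) hx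
    have hymax : ∀ n, 0 < n → n ∉ A → n ≤ y := by
      intro n h1 h2
      by_contra h
      push_neg at h
      exact Nat.findGreatest_is_greatest h (le_of_lt (hlt n h1 h2)) ⟨h1, h2⟩
    have hy2x : y < 2 * x := hlt y hy.1 hy.2
    have hy1A : y + 1 ∈ A := by
      by_contra h
      have := hymax (y + 1) (by omega) h
      omega
    have hy2A : y + 2 ∈ A := by
      by_contra h
      have := hymax (y + 2) (by omega) h
      omega
    refine ⟨(A ∪ {x}) \ {y + 1, y + 2}, ⟨?_, ?_⟩, ?_, ?_, ?_⟩
    · intro n hn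
      rcases hn.1 with h | h
      · exact hsub h
      · simp only [Set.mem_singleton_iff] at h
        subst h; exact hx.1
    · intro u v hu huv h2u
      by_contra hcon
      push_neg at hcon
      obtain ⟨hu', hv'⟩ := hcon
      simp only [Set.mem_diff, Set.mem_union, Set.mem_singleton_iff,
        Set.mem_insert_iff, not_and, not_or, not_not] at hu' hv'
      -- u ≥ x + 1
      have hu2 : x + 1 ≤ u := by
        by_cases huA : u ∈ A ∨ u = x
        · have h := hu' huA
          by_cases h1 : u = y + 1
          · omega
          · have := h h1; omega
        · push_neg at huA
          have := hxmin u hu huA.1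
          omega
      -- v ≤ y + 2
      have hv2 : v ≤ y + 2 := by
        by_cases hvA : v ∈ A ∨ v = x
        · have h := hv' hvA
          by_cases h1 : v = y + 1
          · omega
          · have := h h1; omega
        · push_neg at hvA
          have := hymax v (by omega) hvA.1
          omega
      omega
    · -- A \ A' = {y+1, y+2}
      have : A \ ((A ∪ {x}) \ {y + 1, y + 2}) = {y + 1, y + 2} := by
        ext n
        simp only [Set.mem_diff, Set.mem_union, Set.mem_singleton_iff,
          Set.mem_insert_iff, not_and, not_or, not_not]
        constructor
        · rintro ⟨hnA, h⟩
          have h' := h (Or.inl hnA)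
          by_cases h1 : n = y + 1
          · exact Or.inl h1
          · exact Or.inr (h' h1)
        · rintro (h | h) <;> subst h
          · exact ⟨hy1A, fun _ h => absurd rfl h⟩
          · exact ⟨hy2A, fun _ _ => rfl⟩
      rw [this]
      exact (Set.finite_singleton _).insert _
    · -- A' \ A = {x}
      have : ((A ∪ {x}) \ {y + 1, y + 2}) \ A = {x} := by
        ext n
        simp only [Set.mem_diff, Set.mem_union, Set.mem_singleton_iff,
          Set.mem_insert_iff, not_or]
        constructor
        · rintro ⟨⟨h | h, _⟩, hnA⟩
          · exact absurd h hnA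
          · exact h
        · rintro rfl
          exact ⟨⟨Or.inr rfl, by omega, by omega⟩, hx.2⟩
      rw [this]
      exact Set.finite_singleton _
    · have h1 : ((A ∪ {x}) \ {y + 1, y + 2}) \ A = {x} := by
        ext n
        simp only [Set.mem_diff, Set.mem_union, Set.mem_singleton_iff,
          Set.mem_insert_iff, not_or]
        constructor
        · rintro ⟨⟨h | h, _⟩, hnA⟩
          · exact absurd h hnA
          · exact h
        · rintro rfl
          exact ⟨⟨Or.inr rfl, by omega, by omega⟩, hx.2⟩
      have h2 : A \ ((A ∪ {x}) \ {y + 1, y + 2}) = {y + 1, y + 2} := by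
        ext n
        simp only [Set.mem_diff, Set.mem_union, Set.mem_singleton_iff,
          Set.mem_insert_iff, not_and, not_or, not_not]
        constructor
        · rintro ⟨hnA, h⟩
          have h' := h (Or.inl hnA)
          by_cases h1 : n = y + 1
          · exact Or.inl h1
          · exact Or.inr (h' h1)
        · rintro (h | h) <;> subst h
          · exact ⟨hy1A, fun _ h => absurd rfl h⟩
          · exact ⟨hy2A, fun _ _ => rfl⟩
      rw [h1, h2, Set.ncard_singleton, Set.ncard_pair (by omega)]
      omega
  · -- A contains all positive integers
    push_neg at hC
    have hall : ∀ n, 0 < n → n ∈ A := fun n h => hC n h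
    refine ⟨{n | 2 ≤ n}, ⟨fun n hn => by simp at hn ⊢; omega, ?_⟩, ?_, ?_, ?_⟩
    · intro u v hu huv h2u
      by_cases h : 2 ≤ u
      · exact Or.inl h
      · right; simp only [Set.mem_setOf_eq]; omega
    · have : A \ {n | 2 ≤ n} = {1} := by
        ext n
        simp only [Set.mem_diff, Set.mem_setOf_eq, Set.mem_singleton_iff, not_le]
        constructor
        · rintro ⟨hnA, h⟩
          have := hsub hnA
          simp only [Set.mem_setOf_eq] at this
          omega
        · rintro rfl
          exact ⟨hall 1 one_pos, by omega⟩
      rw [this]; exact Set.finite_singleton _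
    · have : {n | 2 ≤ n} \ A = ∅ := by
        ext n
        simp only [Set.mem_diff, Set.mem_setOf_eq, Set.mem_empty_iff_false, iff_false,
          not_and, not_not]
        intro h
        exact hall n (by omega)
      rw [this]; exact Set.finite_empty
    · have h1 : {n | 2 ≤ n} \ A = ∅ := by
        ext n
        simp only [Set.mem_diff, Set.mem_setOf_eq, Set.mem_empty_iff_false, iff_false,
          not_and, not_not]
        intro h
        exact hall n (by omega)
      have h2 : A \ {n | 2 ≤ n} = {1} := by
        ext n
        simp only [Set.mem_diff, Set.mem_setOf_eq, Set.mem_singleton_iff, not_le]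
        constructor
        · rintro ⟨hnA, h⟩
          have := hsub hnA
          simp only [Set.mem_setOf_eq] at this
          omega
        · rintro rfl
          exact ⟨hall 1 one_pos, by omega⟩
      rw [h1, h2, Set.ncard_empty, Set.ncard_singleton]
      omega
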